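/- Fix k₀ > 0 and a twice-differentiable trajectory g with g(0) = 0 and |g'| bounded by 1. Suppose the aperture phase Φ satisfies Φ'(ξ) = k₀·g'(z_c(ξ))/√(1 + g'(z_c(ξ))²), where z_c(ξ) is defined implicitly by g(z_c) = ξ + z_c·g'(z_c). Then |Φ'(ξ)| < k₀ for all ξ, and the nonparaxial ray x = ξ + z·Φ'(ξ)/√(k₀² - Φ'(ξ)²) launched from ξ is tangent to the curve x = g(z) at z = z_c(ξ). -/
import Mathlib


/-- Nonparaxial trajectory engineering: if the aperture phase `Φ` satisfies
`Φ'(ξ) = k₀ g'(z_c(ξ))/√(1 + g'(z_c(ξ))²)`, with `z_c(ξ)` defined implicitly by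
`g(z_c) = ξ + z_c g'(z_c)`, then `|Φ'(ξ)| < k₀` for all `ξ`, and the
nonparaxial ray `x = ξ + z Φ'(ξ)/√(k₀² - Φ'(ξ)²)` launched from `ξ` is tangent
to the curve `x = g(z)` at `z = z_c(ξ)`. -/
theorem nonparaxial_ray_tangent (k₀ : ℝ) (hk : 0 < k₀) (g : ℝ → ℝ)
    (hg : ContDiff ℝ 2 g) (hg0 : g 0 = 0)
    (hslope : ∀ z : ℝ, |deriv g z| ≤ 1)
    (zc : ℝ → ℝ)
    (hzc : ∀ ξ : ℝ, g (zc ξ) = ξ + zc ξ * deriv g (zc ξ))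
    (Φ : ℝ → ℝ)
    (hΦ : ∀ ξ : ℝ,
      deriv Φ ξ = k₀ * deriv g (zc ξ) / Real.sqrt (1 + (deriv g (zc ξ)) ^ 2)) :
    ∀ ξ : ℝ,
      |deriv Φ ξ| < k₀ ∧
      ξ + zc ξ * (deriv Φ ξ / Real.sqrt (k₀ ^ 2 - (deriv Φ ξ) ^ 2)) = g (zc ξ) ∧
      deriv Φ ξ / Real.sqrt (k₀ ^ 2 - (deriv Φ ξ) ^ 2) = deriv g (zc ξ) := by
  intro ξ
  set m := deriv g (zc ξ) with hm
  have h1 : (0:ℝ) < 1 + m ^ 2 := by positivity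
  set s := Real.sqrt (1 + m ^ 2) with hs
  have hs0 : 0 < s := Real.sqrt_pos.mpr h1
  have hs2 : s ^ 2 = 1 + m ^ 2 := Real.sq_sqrt h1.le
  have hΦξ : deriv Φ ξ = k₀ * m / s := hΦ ξ
  have hms : |m| < s := by
    have : |m| = Real.sqrt (m ^ 2) := (Real.sqrt_sq_eq_abs m).symm
    rw [this]
    exact Real.sqrt_lt_sqrt (by positivity) (by linarith)
  have habs : |deriv Φ ξ| < k₀ := by
    rw [hΦξ, abs_div, abs_mul, abs_of_pos hk, abs_of_pos hs0,
      div_lt_iff₀ hs0]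
    calc k₀ * |m| < k₀ * s := by nlinarith
      _ = k₀ * s := rfl
  have hsub : k₀ ^ 2 - (deriv Φ ξ) ^ 2 = k₀ ^ 2 / s ^ 2 := by
    rw [hΦξ]
    field_simp
    nlinarith
  have hsqrt : Real.sqrt (k₀ ^ 2 - (deriv Φ ξ) ^ 2) = k₀ / s := by
    rw [hsub, Real.sqrt_div (by positivity), Real.sqrt_sq hk.le,
      Real.sqrt_sq hs0.le]
  have hratio : deriv Φ ξ / Real.sqrt (k₀ ^ 2 - (deriv Φ ξ) ^ 2) = m := by
    rw [hsqrt, hΦξ]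
    field_simp
  refine ⟨habs, ?_, hratio⟩
  rw [hratio, hm, (hzc ξ)]
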